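/- arXiv:0808.1016 — 2 statements merged into one kernel-verified Lean document; each statement's English description precedes it below -/
import Mathlib

section
/- (Shrinkage property) If π > 0 and Med_c ≠ 0, then every median M of the mixture CDF F satisfies |M| < |Med_c|; that is, the median of the mixture is strictly closer to zero than the median of the continuous component. -/
open Filter Topology Function

/-- The mixture CDF `F(β) = π·1_{β ≥ 0} + (1-π)·F_c(β)`. -/
noncomputable def mixCDF (p : ℝ) (Fc : ℝ → ℝ) (β : ℝ) : ℝ :=
  (if 0 ≤ β then p else 0) + (1 - p) * Fc β

/-- `M` is a median of `F`: `F(M) ≥ 1/2` and the left limit `F(M⁻) ≤ 1/2`. -/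
def IsMedian (F : ℝ → ℝ) (M : ℝ) : Prop :=
  1 / 2 ≤ F M ∧ Function.leftLim F M ≤ 1 / 2

lemma leftLim_mixCDF_pos (p : ℝ) (Fc : ℝ → ℝ) (hFc_cont : Continuous Fc)
    (M : ℝ) (hM : 0 < M) :
    Function.leftLim (mixCDF p Fc) M = p + (1 - p) * Fc M := by
  apply leftLim_eq_of_tendsto
  have htend : Tendsto (fun x => p + (1 - p) * Fc x) (𝓝[<] M) (𝓝 (p + (1 - p) * Fc M)) :=
    ((continuous_const.add (continuous_const.mul hFc_cont)).tendsto M).mono_left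
      nhdsWithin_le_nhds
  apply htend.congr'
  filter_upwards [Ioo_mem_nhdsLT_of_mem (show M ∈ Set.Ioc 0 M from ⟨hM, le_refl M⟩)]
    with x hx
  simp [mixCDF, le_of_lt hx.1]

theorem median_shrinks_toward_zero (p : ℝ) (hp0 : 0 ≤ p) (hp1 : p < 1)
    (Fc : ℝ → ℝ) (hFc_cont : Continuous Fc) (hFc_mono : StrictMono Fc)
    (hFc_bot : Tendsto Fc atBot (𝓝 0)) (hFc_top : Tendsto Fc atTop (𝓝 1))
    (medc : ℝ) (hmedc : Fc medc = 1 / 2)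
    (hp_pos : 0 < p) (hmedc_ne : medc ≠ 0) :
    ∀ M : ℝ, IsMedian (mixCDF p Fc) M → |M| < |medc| := by
  intro M ⟨h1, h2⟩
  rcases lt_or_gt_of_ne hmedc_ne with hneg | hpos
  · -- medc < 0
    have hmlt : medc < M := by
      by_contra h
      push_neg at h
      have hM0 : ¬ (0 ≤ M) := by linarith
      have hF : mixCDF p Fc M = (1 - p) * Fc M := by simp [mixCDF, hM0]
      have : Fc M ≤ 1 / 2 := hmedc ▸ hFc_mono.monotone h
      nlinarith [h1, hF ▸ h1]
    have hmlt2 : M < -medc := by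
      by_contra h
      push_neg at h
      have hMpos : 0 < M := by linarith
      rw [leftLim_mixCDF_pos p Fc hFc_cont M hMpos] at h2
      have h3 : Fc medc < Fc (-medc) := hFc_mono (by linarith)
      have h4 : Fc (-medc) ≤ Fc M := hFc_mono.monotone h
      rw [hmedc] at h3
      nlinarith
    rw [abs_of_neg hneg]
    rw [abs_lt]
    constructor <;> linarith
  · -- medc > 0
    have hmlt : M < medc := by
      by_contra h
      push_neg at h
      have hMpos : 0 < M := by linarith
      rw [leftLim_mixCDF_pos p Fc hFc_cont M hMpos] at h2
      have h4 : Fc medc ≤ Fc M := hFc_mono.monotone h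
      rw [hmedc] at h4
      nlinarith
    have hmlt2 : -medc < M := by
      by_contra h
      push_neg at h
      have hM0 : ¬ (0 ≤ M) := by linarith
      have hF : mixCDF p Fc M = (1 - p) * Fc M := by simp [mixCDF, hM0]
      have h3 : Fc M < Fc medc := hFc_mono (by linarith)
      rw [hmedc] at h3
      nlinarith [hF ▸ h1]
    rw [abs_of_pos hpos, abs_lt]
    exact ⟨hmlt2, hmlt⟩
end

section
/- (Location-scale form, equation (2.8), negative case) Suppose F_c(β) = G((β - m)/σ) where σ > 0, m < 0, and G : ℝ → ℝ is a continuous, strictly increasing CDF satisfying the symmetry G(-x) = 1 - G(x) for all x (so G(0) = 1/2 and Med_c = m). If O < |1 - 2·F_c(0)|, then the unique median of the mixture CDF F equals m + σ·G^{-1}((1 + O)/2), where G^{-1}((1+O)/2) is the unique x with G(x) = (1+O)/2. -/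
open Filter Topology Function

private lemma mix_eq_neg (p : ℝ) (Fc : ℝ → ℝ) {β : ℝ} (h : β < 0) :
    mixCDF p Fc β = (1 - p) * Fc β := by
  simp [mixCDF, not_le.mpr h]

private lemma leftLim_mix_nonpos (p : ℝ) (Fc : ℝ → ℝ) (hFc_cont : Continuous Fc)
    {M : ℝ} (hM : M ≤ 0) :
    Function.leftLim (mixCDF p Fc) M = (1 - p) * Fc M := by
  apply leftLim_eq_of_tendsto
  have h : Tendsto (fun β => (1 - p) * Fc β) (𝓝[<] M) (𝓝 ((1 - p) * Fc M)) :=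
    ((continuous_const.mul hFc_cont).tendsto M).mono_left nhdsWithin_le_nhds
  refine h.congr' ?_
  filter_upwards [self_mem_nhdsWithin] with β hβ
  exact (mix_eq_neg p Fc (lt_of_lt_of_le hβ hM)).symm

private lemma leftLim_mix_pos (p : ℝ) (Fc : ℝ → ℝ) (hFc_cont : Continuous Fc)
    {M : ℝ} (hM : 0 < M) :
    Function.leftLim (mixCDF p Fc) M = p + (1 - p) * Fc M := by
  apply leftLim_eq_of_tendsto
  have h : Tendsto (fun β => p + (1 - p) * Fc β) (𝓝[<] M)
      (𝓝 (p + (1 - p) * Fc M)) :=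
    ((continuous_const.add (continuous_const.mul hFc_cont)).tendsto M).mono_left
      nhdsWithin_le_nhds
  refine h.congr' ?_
  filter_upwards [mem_nhdsWithin_of_mem_nhds (isOpen_Ioi.mem_nhds hM)] with β hβ
  simp [mixCDF, le_of_lt (Set.mem_Ioi.mp hβ)]

theorem location_scale_median_neg_case (p : ℝ) (hp0 : 0 ≤ p) (hp1 : p < 1)
    (Fc : ℝ → ℝ) (hFc_cont : Continuous Fc) (hFc_mono : StrictMono Fc)
    (hFc_bot : Tendsto Fc atBot (𝓝 0)) (hFc_top : Tendsto Fc atTop (𝓝 1))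
    (G : ℝ → ℝ) (hG_cont : Continuous G) (hG_mono : StrictMono G)
    (hG_bot : Tendsto G atBot (𝓝 0)) (hG_top : Tendsto G atTop (𝓝 1))
    (hG_sym : ∀ x : ℝ, G (-x) = 1 - G x)
    (m σ : ℝ) (hσ : 0 < σ)
    (hFc : ∀ β : ℝ, Fc β = G ((β - m) / σ)) (hm : m < 0)
    (hO : p / (1 - p) < |1 - 2 * Fc 0|) :
    ∃ x : ℝ, G x = (1 + p / (1 - p)) / 2 ∧
      IsMedian (mixCDF p Fc) (m + σ * x) ∧
      ∀ M : ℝ, IsMedian (mixCDF p Fc) M → M = m + σ * x := by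
  have h1p : (0:ℝ) < 1 - p := by linarith
  set O := p / (1 - p) with hO_def
  have hOp : (1 - p) * O = p := by rw [hO_def]; field_simp
  have hO0 : 0 ≤ O := div_nonneg hp0 h1p.le
  have hG0 : G 0 = 1 / 2 := by have := hG_sym 0; norm_num at this; linarith
  have hFc0 : Fc 0 = G (-m / σ) := by rw [hFc]; congr 1; ring
  have hFc0half : 1 / 2 < Fc 0 := by
    rw [hFc0, ← hG0]
    exact hG_mono (div_pos (by linarith) hσ)
  have habs : |1 - 2 * Fc 0| = 2 * Fc 0 - 1 := by
    rw [abs_of_neg (by linarith)]; ring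
  rw [habs] at hO
  set t := (1 + O) / 2 with ht_def
  have ht0 : 0 < t := by positivity
  have ht_lt : t < G (-m / σ) := by rw [← hFc0]; simp only [ht_def]; linarith
  -- find a with G a < t
  obtain ⟨a, ha⟩ := (hG_bot.eventually_lt_const ht0).exists
  have ha' : G (min a (-m / σ)) ≤ t :=
    le_of_lt (lt_of_le_of_lt (hG_mono.monotone (min_le_left _ _)) ha)
  obtain ⟨x, hx_mem, hx⟩ := intermediate_value_Icc (min_le_right a (-m / σ))
    hG_cont.continuousOn (Set.mem_Icc.mpr ⟨ha', ht_lt.le⟩)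
  refine ⟨x, hx, ?_, ?_⟩
  · -- Is median
    have hxlt : x < -m / σ := hG_mono.lt_iff_lt.mp (hx ▸ ht_lt)
    have hMneg : m + σ * x < 0 := by
      have h := (lt_div_iff₀ hσ).mp hxlt
      nlinarith
    have hFcM : Fc (m + σ * x) = t := by
      rw [hFc]
      have : (m + σ * x - m) / σ = x := by field_simp; ring
      rw [this, hx]
    have h2t : (1 - p) * t = 1 / 2 := by
      rw [ht_def]; linear_combination hOp / 2
    have hFM : mixCDF p Fc (m + σ * x) = 1 / 2 := by
      rw [mix_eq_neg p Fc hMneg, hFcM, h2t]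
    constructor
    · rw [hFM]
    · rw [leftLim_mix_nonpos p Fc hFc_cont hMneg.le, hFcM, h2t]
  · -- uniqueness
    intro M hM
    have hxlt : x < -m / σ := hG_mono.lt_iff_lt.mp (hx ▸ ht_lt)
    have hMneg : m + σ * x < 0 := by
      have h := (lt_div_iff₀ hσ).mp hxlt
      nlinarith
    have hFcM : Fc (m + σ * x) = t := by
      rw [hFc]
      have : (m + σ * x - m) / σ = x := by field_simp; ring
      rw [this, hx]
    have hFc0big : 1 / 2 < (1 - p) * Fc 0 := by nlinarith
    rcases lt_trichotomy M 0 with hMlt | hMeq | hMgt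
    · -- M < 0 : F M = leftLim = (1-p) Fc M = 1/2
      obtain ⟨h1, h2⟩ := hM
      rw [mix_eq_neg p Fc hMlt] at h1
      rw [leftLim_mix_nonpos p Fc hFc_cont hMlt.le] at h2
      have heq : (1 - p) * Fc M = 1 / 2 := le_antisymm h2 h1
      have heq2 : (1 - p) * Fc (m + σ * x) = 1 / 2 := by
        rw [hFcM, ht_def]; linear_combination hOp / 2
      have : Fc M = Fc (m + σ * x) := by
        have := heq.trans heq2.symm
        exact mul_left_cancel₀ (ne_of_gt h1p) this
      exact hFc_mono.injective this
    · exfalso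
      obtain ⟨-, h2⟩ := hM
      rw [hMeq, leftLim_mix_nonpos p Fc hFc_cont le_rfl] at h2
      linarith
    · exfalso
      obtain ⟨-, h2⟩ := hM
      rw [leftLim_mix_pos p Fc hFc_cont hMgt] at h2
      have : Fc 0 ≤ Fc M := (hFc_mono.monotone hMgt.le)
      nlinarith
end
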